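/- If two rooted trees S and T satisfy Lindell's canonical order relation with S ≤ T and T ≤ S (i.e., neither is strictly smaller), then S and T are isomorphic as rooted trees. -/

import Mathlib

/-- Rooted trees with unordered (listed) children. -/
inductive RTree : Type where
  | node : List RTree → RTree

mutual
/-- Auxiliary: total size of a list of rooted trees. -/
def RTree.sizeList : List RTree → ℕ
  | [] => 0
  | c :: cs => RTree.size c + RTree.sizeList cs

/-- The number of nodes of a rooted tree. -/
def RTree.size : RTree → ℕ
  | .node cs => 1 + RTree.sizeList cs
end

/-- Isomorphism of rooted trees: a bijection of vertices preserving the root and the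
parent-child relation, i.e., the children correspond up to permutation and recursive
isomorphism. -/
inductive RTree.Iso : RTree → RTree → Prop where
  | node (cs ds ds' : List RTree) :
      ds.Perm ds' → List.Forall₂ RTree.Iso cs ds' → RTree.Iso (.node cs) (.node ds)

/-- Lexicographic comparison of lists with respect to a strict order `r`, where two
entries are considered tied when neither is `r`-smaller than the other. -/
inductive ListLex {α : Type*} (r : α → α → Prop) : List α → List α → Prop where
  | head {a b : α} {l₁ l₂ : List α} : r a b → ListLex r (a :: l₁) (b :: l₂)
  | tail {a b : α} {l₁ l₂ : List α} :
      ¬ r a b → ¬ r b a → ListLex r l₁ l₂ → ListLex r (a :: l₁) (b :: l₂)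

/-! ### Auxiliary development -/


def RTie (lt : RTree → RTree → Prop) (a b : RTree) : Prop := ¬ lt a b ∧ ¬ lt b a

lemma RTree.size_pos (t : RTree) : 1 ≤ t.size := by
  cases t with
  | node cs => simp [RTree.size]

lemma RTree.size_le_sizeList {x : RTree} : ∀ {l : List RTree}, x ∈ l → x.size ≤ RTree.sizeList l := by
  intro l
  induction l with
  | nil => simp
  | cons c cs ih =>
    intro h
    rcases List.mem_cons.mp h with h | h
    · subst h; simp [RTree.sizeList]
    · have := ih h; simp only [RTree.sizeList]; omega

section Aux

variable {lt : RTree → RTree → Prop} {P : RTree → Prop}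

lemma lex_asymm (hA : ∀ x y, P x → P y → lt x y → ¬ lt y x)
    {l₁ l₂ : List RTree} (hl : ListLex lt l₁ l₂) :
    (∀ x ∈ l₁, P x) → (∀ x ∈ l₂, P x) → ListLex lt l₂ l₁ → False := by
  induction hl with
  | @head a b l₁ l₂ hab =>
    intro h₁ h₂ h
    cases h with
    | head hba => exact hA _ _ (h₁ _ (by simp)) (h₂ _ (by simp)) hab hba
    | tail hnba hnab _ => exact hnab hab
  | @tail a b l₁ l₂ hnab hnba _ ih =>
    intro h₁ h₂ h
    cases h with
    | head hba => exact hnba hba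
    | tail _ _ htl =>
      exact ih (fun x hx => h₁ x (by simp [hx])) (fun x hx => h₂ x (by simp [hx])) htl

lemma forall₂_tie_trans (hB : ∀ x y z, P x → P y → P z → ¬ lt y x → ¬ lt z y → ¬ lt z x) :
    ∀ {l m n : List RTree}, List.Forall₂ (RTie lt) l m → List.Forall₂ (RTie lt) m n →
      (∀ x ∈ l, P x) → (∀ x ∈ m, P x) → (∀ x ∈ n, P x) →
      List.Forall₂ (RTie lt) l n := by
  intro l m n h₁
  induction h₁ generalizing n with
  | nil => intro h₂ _ _ _; cases h₂; exact List.Forall₂.nil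
  | @cons a b l m hab _ ih =>
    intro h₂ hl hm hn
    cases h₂ with
    | @cons _ c _ n' hbc htl =>
      have Pa := hl a (by simp); have Pb := hm b (by simp); have Pc := hn c (by simp)
      refine List.Forall₂.cons ⟨hB c b a Pc Pb Pa hbc.1 hab.1, hB a b c Pa Pb Pc hab.2 hbc.2⟩ ?_
      exact ih htl (fun x hx => hl x (by simp [hx])) (fun x hx => hm x (by simp [hx]))
        (fun x hx => hn x (by simp [hx]))

lemma insert_sorted (hA : ∀ x y, P x → P y → lt x y → ¬ lt y x)
    (hB : ∀ x y z, P x → P y → P z → ¬ lt y x → ¬ lt z y → ¬ lt z x) :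
    ∀ (t : List RTree) (a : RTree), P a → (∀ x ∈ t, P x) →
      List.Pairwise (fun x y => ¬ lt y x) t →
      ∃ l', List.Perm (a :: t) l' ∧ List.Pairwise (fun x y => ¬ lt y x) l' := by
  intro t
  induction t with
  | nil => intro a _ _ _; exact ⟨[a], List.Perm.refl _, by simp⟩
  | cons b u ih =>
    intro a Pa Pt hs
    rw [List.pairwise_cons] at hs
    by_cases h : ¬ lt b a
    · refine ⟨a :: b :: u, List.Perm.refl _, ?_⟩
      rw [List.pairwise_cons]
      refine ⟨?_, List.pairwise_cons.mpr ⟨hs.1, hs.2⟩⟩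
      intro x hx
      rcases List.mem_cons.mp hx with rfl | hx
      · exact h
      · exact hB a b x Pa (Pt b (by simp)) (Pt x (by simp [hx])) h (hs.1 x hx)
    · push_neg at h
      have hba : ¬ lt a b := hA b a (Pt b (by simp)) Pa h
      obtain ⟨u', pu, su⟩ := ih a Pa (fun x hx => Pt x (by simp [hx])) hs.2
      refine ⟨b :: u', ?_, ?_⟩
      · exact (List.Perm.swap b a u).trans (pu.cons b)
      · rw [List.pairwise_cons]
        refine ⟨?_, su⟩
        intro x hx
        have hx' : x ∈ a :: u := pu.mem_iff.mpr hx
        rcases List.mem_cons.mp hx' with rfl | hx'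
        · exact hba
        · exact hs.1 x hx'

lemma exists_sorted_perm (hA : ∀ x y, P x → P y → lt x y → ¬ lt y x)
    (hB : ∀ x y z, P x → P y → P z → ¬ lt y x → ¬ lt z y → ¬ lt z x) :
    ∀ (l : List RTree), (∀ x ∈ l, P x) →
      ∃ l', l.Perm l' ∧ List.Pairwise (fun x y => ¬ lt y x) l' := by
  intro l
  induction l with
  | nil => intro _; exact ⟨[], List.Perm.refl _, by simp⟩
  | cons a t ih =>
    intro hl
    obtain ⟨t', pt, st⟩ := ih (fun x hx => hl x (by simp [hx]))
    obtain ⟨l', p', s'⟩ := insert_sorted hA hB t' a (hl a (by simp))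
      (fun x hx => hl x (by simp [pt.mem_iff.mpr hx])) st
    exact ⟨l', (pt.cons a).trans p', s'⟩

lemma forall₂_tie_of_sorted_perm (hA : ∀ x y, P x → P y → lt x y → ¬ lt y x)
    (hB : ∀ x y z, P x → P y → P z → ¬ lt y x → ¬ lt z y → ¬ lt z x) :
    ∀ (n : ℕ) (l₁ l₂ : List RTree), l₁.length ≤ n → (∀ x ∈ l₁, P x) →
      l₁.Perm l₂ → List.Pairwise (fun x y => ¬ lt y x) l₁ →
      List.Pairwise (fun x y => ¬ lt y x) l₂ →
      List.Forall₂ (RTie lt) l₁ l₂ := by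
  classical
  intro n
  induction n with
  | zero =>
    intro l₁ l₂ hlen _ p _ _
    have h1 : l₁ = [] := List.length_eq_zero_iff.mp (Nat.le_zero.mp hlen)
    subst h1
    have h2 : l₂ = [] := p.symm.eq_nil
    subst h2
    exact List.Forall₂.nil
  | succ n ih =>
    intro l₁ l₂ hlen h₁ p s₁ s₂
    cases l₁ with
    | nil =>
      have h2 : l₂ = [] := p.symm.eq_nil
      subst h2; exact List.Forall₂.nil
    | cons a t₁ =>
      cases l₂ with
      | nil => exact absurd p.eq_nil (by simp)
      | cons b t₂ =>
        rw [List.pairwise_cons] at s₁ s₂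
        have Pa : P a := h₁ a (by simp)
        have Pt₁ : ∀ x ∈ t₁, P x := fun x hx => h₁ x (by simp [hx])
        have Pmem₂ : ∀ x ∈ b :: t₂, P x := fun x hx => h₁ x (p.mem_iff.mpr hx)
        have Pb : P b := Pmem₂ b (by simp)
        have irrefl : ∀ x, P x → ¬ lt x x := fun x hx h => hA x x hx hx h h
        -- the heads are tied
        have hab : ¬ lt b a := by
          have hb : b ∈ a :: t₁ := p.mem_iff.mpr (by simp)
          rcases List.mem_cons.mp hb with h | hb
          · rw [h]; exact irrefl a Pa
          · exact s₁.1 b hb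
        have hba : ¬ lt a b := by
          have ha : a ∈ b :: t₂ := p.symm.mem_iff.mpr (by simp)
          rcases List.mem_cons.mp ha with h | ha
          · rw [h]; exact irrefl b Pb
          · exact s₂.1 a ha
        by_cases hb : b = a
        · subst hb
          exact List.Forall₂.cons ⟨hba, hab⟩
            (ih t₁ t₂ (by simpa using hlen) Pt₁ p.cons_inv s₁.2 s₂.2)
        · have hbt₁ : b ∈ t₁ := by
            have h := p.mem_iff.mpr (show b ∈ b :: t₂ by simp)
            rcases List.mem_cons.mp h with h | h
            · exact absurd h hb
            · exact h
          set e := t₁.erase b with he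
          have Pe : ∀ x ∈ e, P x := fun x hx => Pt₁ x (List.mem_of_mem_erase hx)
          have perm1 : t₁.Perm (b :: e) := List.perm_cons_erase hbt₁
          have se : List.Pairwise (fun x y => ¬ lt y x) e :=
            s₁.2.sublist (List.erase_sublist (a := b) (l := t₁))
          have sorted_be : List.Pairwise (fun x y => ¬ lt y x) (b :: e) := by
            rw [List.pairwise_cons]
            refine ⟨fun x hx => ?_, se⟩
            exact hB b a x Pb Pa (Pe x hx) hba (s₁.1 x (List.mem_of_mem_erase hx))
          have sorted_ae : List.Pairwise (fun x y => ¬ lt y x) (a :: e) := by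
            rw [List.pairwise_cons]
            exact ⟨fun x hx => s₁.1 x (List.mem_of_mem_erase hx), se⟩
          have hlent₁ : t₁.length ≤ n := by simpa using hlen
          have F1 : List.Forall₂ (RTie lt) t₁ (b :: e) :=
            ih t₁ (b :: e) hlent₁ Pt₁ perm1 s₁.2 sorted_be
          have F2 : List.Forall₂ (RTie lt) (b :: e) (a :: e) :=
            List.Forall₂.cons ⟨hab, hba⟩
              (List.forall₂_same.mpr fun x hx => ⟨irrefl x (Pe x hx), irrefl x (Pe x hx)⟩)
          have perm2 : (a :: e).Perm t₂ := by
            have q : (a :: t₁).Perm (b :: a :: e) :=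
              (perm1.cons a).trans (List.Perm.swap b a e)
            exact ((p.symm.trans q).cons_inv).symm
          have hlenae : (a :: e).length ≤ n := by
            have := List.length_erase_of_mem hbt₁
            have := List.length_pos_of_mem hbt₁
            simp only [List.length_cons, he]
            omega
          have Pae : ∀ x ∈ a :: e, P x := by
            intro x hx
            rcases List.mem_cons.mp hx with rfl | hx
            · exact Pa
            · exact Pe x hx
          have F3 : List.Forall₂ (RTie lt) (a :: e) t₂ :=
            ih (a :: e) t₂ hlenae Pae perm2 sorted_ae s₂.2
          have Pbe : ∀ x ∈ b :: e, P x := by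
            intro x hx
            rcases List.mem_cons.mp hx with rfl | hx
            · exact Pb
            · exact Pe x hx
          have Pt₂ : ∀ x ∈ t₂, P x := fun x hx => Pmem₂ x (by simp [hx])
          have F12 : List.Forall₂ (RTie lt) t₁ (a :: e) :=
            forall₂_tie_trans hB F1 F2 Pt₁ Pbe Pae
          have F123 : List.Forall₂ (RTie lt) t₁ t₂ :=
            forall₂_tie_trans hB F12 F3 Pt₁ Pae Pt₂
          exact List.Forall₂.cons ⟨hba, hab⟩ F123

lemma lex_total3 (hB : ∀ x y z, P x → P y → P z → ¬ lt y x → ¬ lt z y → ¬ lt z x) :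
    ∀ {cs as : List RTree}, ListLex lt cs as →
      ∀ bs : List RTree, bs.length = as.length →
      (∀ x ∈ cs, P x) → (∀ x ∈ as, P x) → (∀ x ∈ bs, P x) →
      ListLex lt cs bs ∨ ListLex lt bs as := by
  intro cs as hl
  induction hl with
  | @head c a cs₀ as₀ hca =>
    intro bs hlen hc ha hb
    cases bs with
    | nil => simp at hlen
    | cons b bs₀ =>
      by_cases h1 : lt c b
      · exact Or.inl (ListLex.head h1)
      by_cases h2 : lt b a
      · exact Or.inr (ListLex.head h2)
      exact absurd hca (hB _ _ _ (ha a (by simp)) (hb b (by simp)) (hc c (by simp)) h2 h1)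
  | @tail c a cs₀ as₀ hnca hnac _ ih =>
    intro bs hlen hc ha hb
    cases bs with
    | nil => simp at hlen
    | cons b bs₀ =>
      have Pc := hc c (by simp); have Pa := ha a (by simp); have Pb := hb b (by simp)
      by_cases h1 : lt c b
      · exact Or.inl (ListLex.head h1)
      by_cases h2 : lt b a
      · exact Or.inr (ListLex.head h2)
      have hnbc : ¬ lt b c := hB c a b Pc Pa Pb hnac h2
      have hnab : ¬ lt a b := hB b c a Pb Pc Pa h1 hnac
      rcases ih bs₀ (by simpa using hlen) (fun x hx => hc x (by simp [hx]))
          (fun x hx => ha x (by simp [hx])) (fun x hx => hb x (by simp [hx])) with h | h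
      · exact Or.inl (ListLex.tail h1 hnbc h)
      · exact Or.inr (ListLex.tail h2 hnab h)

lemma lex_transport (hB : ∀ x y z, P x → P y → P z → ¬ lt y x → ¬ lt z y → ¬ lt z x) :
    ∀ {l₁ l₂ : List RTree}, ListLex lt l₁ l₂ →
      ∀ {l₁' l₂' : List RTree}, List.Forall₂ (RTie lt) l₁ l₁' →
        List.Forall₂ (RTie lt) l₂ l₂' →
        (∀ x ∈ l₁, P x) → (∀ x ∈ l₂, P x) → (∀ x ∈ l₁', P x) → (∀ x ∈ l₂', P x) →
        ListLex lt l₁' l₂' := by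
  intro l₁ l₂ hl
  induction hl with
  | @head a b t₁ t₂ hab =>
    intro l₁' l₂' F1 F2 h₁ h₂ h₁' h₂'
    cases F1 with
    | @cons _ a' _ m₁ ta F1' =>
      cases F2 with
      | @cons _ b' _ m₂ tb F2' =>
        have Pa := h₁ a (by simp); have Pb := h₂ b (by simp)
        have Pa' := h₁' a' (by simp); have Pb' := h₂' b' (by simp)
        refine ListLex.head ?_
        by_contra hn
        have step1 : ¬ lt a' b := hB b b' a' Pb Pb' Pa' tb.2 hn
        have step2 : ¬ lt a b := hB b a' a Pb Pa' Pa step1 ta.1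
        exact step2 hab
  | @tail a b t₁ t₂ hnab hnba _ ih =>
    intro l₁' l₂' F1 F2 h₁ h₂ h₁' h₂'
    cases F1 with
    | @cons _ a' _ m₁ ta F1' =>
      cases F2 with
      | @cons _ b' _ m₂ tb F2' =>
        have Pa := h₁ a (by simp); have Pb := h₂ b (by simp)
        have Pa' := h₁' a' (by simp); have Pb' := h₂' b' (by simp)
        have hnab' : ¬ lt a' b' := by
          have s1 : ¬ lt a b' := hB b' b a Pb' Pb Pa tb.1 hnab
          exact hB b' a a' Pb' Pa Pa' s1 ta.2
        have hnba' : ¬ lt b' a' := by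
          have s1 : ¬ lt b a' := hB a' a b Pa' Pa Pb ta.1 hnba
          exact hB a' b b' Pa' Pb Pb' s1 tb.2
        exact ListLex.tail hnab' hnba'
          (ih F1' F2' (fun x hx => h₁ x (by simp [hx])) (fun x hx => h₂ x (by simp [hx]))
            (fun x hx => h₁' x (by simp [hx])) (fun x hx => h₂' x (by simp [hx])))

lemma forall₂_tie_of_not_lex :
    ∀ {l₁ l₂ : List RTree}, l₁.length = l₂.length →
      ¬ ListLex lt l₁ l₂ → ¬ ListLex lt l₂ l₁ → List.Forall₂ (RTie lt) l₁ l₂ := by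
  intro l₁
  induction l₁ with
  | nil =>
    intro l₂ hlen _ _
    have : l₂ = [] := List.length_eq_zero_iff.mp (by simpa using hlen.symm)
    subst this; exact List.Forall₂.nil
  | cons a t₁ ih =>
    intro l₂ hlen h₁ h₂
    cases l₂ with
    | nil => simp at hlen
    | cons b t₂ =>
      have hnab : ¬ lt a b := fun h => h₁ (ListLex.head h)
      have hnba : ¬ lt b a := fun h => h₂ (ListLex.head h)
      exact List.Forall₂.cons ⟨hnab, hnba⟩
        (ih (by simpa using hlen) (fun h => h₁ (ListLex.tail hnab hnba h))
          (fun h => h₂ (ListLex.tail hnba hnab h)))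

lemma forall₂_imp_mem {R S : RTree → RTree → Prop} :
    ∀ {l₁ l₂ : List RTree}, List.Forall₂ R l₁ l₂ →
      (∀ x ∈ l₁, ∀ y ∈ l₂, R x y → S x y) → List.Forall₂ S l₁ l₂ := by
  intro l₁ l₂ h
  induction h with
  | nil => intro _; exact List.Forall₂.nil
  | @cons a b t₁ t₂ hab _ ih =>
    intro h
    exact List.Forall₂.cons (h a (by simp) b (by simp) hab)
      (ih fun x hx y hy hxy => h x (by simp [hx]) y (by simp [hy]) hxy)

lemma forall₂_perm_left {R : RTree → RTree → Prop} :
    ∀ {l₁ l₁' : List RTree}, l₁.Perm l₁' → ∀ {l₂ : List RTree}, List.Forall₂ R l₁' l₂ →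
      ∃ l₂', l₂.Perm l₂' ∧ List.Forall₂ R l₁ l₂' := by
  intro l₁ l₁' p
  induction p with
  | nil =>
    intro l₂ h; cases h; exact ⟨[], List.Perm.refl _, List.Forall₂.nil⟩
  | @cons x t t' _ ih =>
    intro l₂ h
    cases h with
    | @cons _ y _ m hxy htl =>
      obtain ⟨m', pm, F⟩ := ih htl
      exact ⟨y :: m', pm.cons y, List.Forall₂.cons hxy F⟩
  | @swap x y t =>
    intro l₂ h
    cases h with
    | @cons _ b _ m hxb htl =>
      cases htl with
      | @cons _ c _ m' hyc htl' =>
        exact ⟨c :: b :: m', List.Perm.swap c b m', List.Forall₂.cons hyc (List.Forall₂.cons hxb htl')⟩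
  | @trans l₁ l₂ l₃ _ _ ihp ihq =>
    intro m h
    obtain ⟨m', pm, F⟩ := ihq h
    obtain ⟨m'', pm', F'⟩ := ihp F
    exact ⟨m'', pm.trans pm', F'⟩

end Aux

lemma swo (lt : RTree → RTree → Prop)
    (hspec : ∀ cs ds : List RTree,
      lt (.node cs) (.node ds) ↔
        (RTree.size (.node cs) < RTree.size (.node ds) ∨
         (RTree.size (.node cs) = RTree.size (.node ds) ∧ cs.length < ds.length) ∨
         (RTree.size (.node cs) = RTree.size (.node ds) ∧ cs.length = ds.length ∧
           ∃ cs' ds' : List RTree, cs.Perm cs' ∧ ds.Perm ds' ∧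
             List.Pairwise (fun x y => ¬ lt y x) cs' ∧
             List.Pairwise (fun x y => ¬ lt y x) ds' ∧
             ListLex lt cs' ds'))) :
    ∀ m : ℕ,
      (∀ a b : RTree, a.size ≤ m → b.size ≤ m → lt a b → ¬ lt b a) ∧
      (∀ a b c : RTree, a.size ≤ m → b.size ≤ m → c.size ≤ m →
        ¬ lt b a → ¬ lt c b → ¬ lt c a) := by
  intro m
  induction m using Nat.strong_induction_on with
  | _ m IH =>
    set P : RTree → Prop := fun t => t.size < m with hP
    have hA : ∀ x y, P x → P y → lt x y → ¬ lt y x := by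
      intro x y hx hy
      have h1 := RTree.size_pos x
      exact (IH (m - 1) (by omega)).1 x y (by omega) (by omega)
    have hB : ∀ x y z, P x → P y → P z → ¬ lt y x → ¬ lt z y → ¬ lt z x := by
      intro x y z hx hy hz
      have h1 := RTree.size_pos x
      exact (IH (m - 1) (by omega)).2 x y z (by omega) (by omega) (by omega)
    have Pmem : ∀ (cs : List RTree), (RTree.node cs).size ≤ m → ∀ x ∈ cs, P x := by
      intro cs hcs x hx
      have h1 := RTree.size_le_sizeList hx
      simp only [RTree.size] at hcs
      simp only [hP]
      omega
    constructor
    · intro a b ha hb h1 h2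
      cases a with
      | node cs =>
        cases b with
        | node ds =>
          rw [hspec] at h1 h2
          rcases h1 with h1 | ⟨h1a, h1b⟩ | ⟨hsz, hlen, cs1, ds1, pcs1, pds1, scs1, sds1, hlex1⟩ <;>
            rcases h2 with h2 | ⟨h2a, h2b⟩ | ⟨h2a', h2b', ds2, cs2, pds2, pcs2, sds2, scs2, hlex2⟩ <;>
            try omega
          · -- both via clause 3
            have Pcs : ∀ x ∈ cs, P x := Pmem cs ha
            have Pds : ∀ x ∈ ds, P x := Pmem ds hb
            have Pcs1 : ∀ x ∈ cs1, P x := fun x hx => Pcs x (pcs1.mem_iff.mpr hx)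
            have Pcs2 : ∀ x ∈ cs2, P x := fun x hx => Pcs x (pcs2.mem_iff.mpr hx)
            have Pds1 : ∀ x ∈ ds1, P x := fun x hx => Pds x (pds1.mem_iff.mpr hx)
            have Pds2 : ∀ x ∈ ds2, P x := fun x hx => Pds x (pds2.mem_iff.mpr hx)
            have Fc : List.Forall₂ (RTie lt) cs1 cs2 :=
              forall₂_tie_of_sorted_perm hA hB cs1.length cs1 cs2 le_rfl Pcs1
                (pcs1.symm.trans pcs2) scs1 scs2
            have Fd : List.Forall₂ (RTie lt) ds1 ds2 :=
              forall₂_tie_of_sorted_perm hA hB ds1.length ds1 ds2 le_rfl Pds1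
                (pds1.symm.trans pds2) sds1 sds2
            have hlex1' : ListLex lt cs2 ds2 :=
              lex_transport hB hlex1 Fc Fd Pcs1 Pds1 Pcs2 Pds2
            exact lex_asymm hA hlex1' Pcs2 Pds2 hlex2
    · intro a b c ha hb hc hba hcb hca
      cases a with
      | node as =>
        cases b with
        | node bs =>
          cases c with
          | node cs₀ =>
            have sab : (RTree.node as).size ≤ (RTree.node bs).size := by
              by_contra h
              exact hba ((hspec bs as).mpr (Or.inl (by omega)))
            have sbc : (RTree.node bs).size ≤ (RTree.node cs₀).size := by
              by_contra h
              exact hcb ((hspec cs₀ bs).mpr (Or.inl (by omega)))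
            rw [hspec] at hca
            rcases hca with h | h | h
            · omega
            · obtain ⟨hsz, hlen⟩ := h
              have lab : as.length ≤ bs.length := by
                by_contra hh
                exact hba ((hspec bs as).mpr (Or.inr (Or.inl ⟨by omega, by omega⟩)))
              have lbc : bs.length ≤ cs₀.length := by
                by_contra hh
                exact hcb ((hspec cs₀ bs).mpr (Or.inr (Or.inl ⟨by omega, by omega⟩)))
              omega
            · obtain ⟨hsz, hlen, cs', as', pcs, pas, scs, sas, hlex⟩ := h
              have lab : as.length ≤ bs.length := by
                by_contra hh
                exact hba ((hspec bs as).mpr (Or.inr (Or.inl ⟨by omega, by omega⟩)))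
              have lbc : bs.length ≤ cs₀.length := by
                by_contra hh
                exact hcb ((hspec cs₀ bs).mpr (Or.inr (Or.inl ⟨by omega, by omega⟩)))
              have Pas : ∀ x ∈ as, P x := Pmem as ha
              have Pbs : ∀ x ∈ bs, P x := Pmem bs hb
              have Pcs : ∀ x ∈ cs₀, P x := Pmem cs₀ hc
              have Pas' : ∀ x ∈ as', P x := fun x hx => Pas x (pas.mem_iff.mpr hx)
              have Pcs' : ∀ x ∈ cs', P x := fun x hx => Pcs x (pcs.mem_iff.mpr hx)
              obtain ⟨bs', pbs, sbs⟩ := exists_sorted_perm hA hB bs Pbs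
              have Pbs' : ∀ x ∈ bs', P x := fun x hx => Pbs x (pbs.mem_iff.mpr hx)
              have hlen' : bs'.length = as'.length := by
                rw [← pbs.length_eq, ← pas.length_eq]
                omega
              rcases lex_total3 hB hlex bs' hlen' Pcs' Pas' Pbs' with h | h
              · exact hcb ((hspec cs₀ bs).mpr (Or.inr (Or.inr
                  ⟨by omega, by omega, cs', bs', pcs, pbs, scs, sbs, h⟩)))
              · exact hba ((hspec bs as).mpr (Or.inr (Or.inr
                  ⟨by omega, by omega, bs', as', pbs, pas, sbs, sas, h⟩)))

/-- If `lt` is Lindell's canonical order on rooted trees — `S < T` iff `|S| < |T|`,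
or sizes are equal and the root of `S` has fewer children, or sizes and numbers of
children are equal and the sorted lists of subtrees compare lexicographically — then
two trees neither of which is strictly smaller than the other are isomorphic. -/
theorem lindell_order_equal_implies_iso (lt : RTree → RTree → Prop)
    (hspec : ∀ cs ds : List RTree,
      lt (.node cs) (.node ds) ↔
        (RTree.size (.node cs) < RTree.size (.node ds) ∨
         (RTree.size (.node cs) = RTree.size (.node ds) ∧ cs.length < ds.length) ∨
         (RTree.size (.node cs) = RTree.size (.node ds) ∧ cs.length = ds.length ∧
           ∃ cs' ds' : List RTree, cs.Perm cs' ∧ ds.Perm ds' ∧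
             List.Pairwise (fun x y => ¬ lt y x) cs' ∧
             List.Pairwise (fun x y => ¬ lt y x) ds' ∧
             ListLex lt cs' ds')))
    (S T : RTree) (hST : ¬ lt S T) (hTS : ¬ lt T S) : RTree.Iso S T := by
  have A : ∀ a b : RTree, lt a b → ¬ lt b a := fun a b =>
    (swo lt hspec (max a.size b.size)).1 a b (le_max_left _ _) (le_max_right _ _)
  have B : ∀ a b c : RTree, ¬ lt b a → ¬ lt c b → ¬ lt c a := fun a b c =>
    (swo lt hspec (max a.size (max b.size c.size))).2 a b c (le_max_left _ _)
      (le_trans (le_max_left _ _) (le_max_right _ _))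
      (le_trans (le_max_right _ _) (le_max_right _ _))
  have hA : ∀ x y : RTree, (fun _ : RTree => True) x → (fun _ : RTree => True) y →
      lt x y → ¬ lt y x := fun x y _ _ => A x y
  have hB : ∀ x y z : RTree, (fun _ : RTree => True) x → (fun _ : RTree => True) y →
      (fun _ : RTree => True) z → ¬ lt y x → ¬ lt z y → ¬ lt z x :=
    fun x y z _ _ _ => B x y z
  suffices H : ∀ n (S T : RTree), S.size + T.size ≤ n → ¬ lt S T → ¬ lt T S → RTree.Iso S T from
    H _ S T le_rfl hST hTS
  intro n
  induction n using Nat.strong_induction_on with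
  | _ n IH =>
    intro S T hn h1 h2
    cases S with
    | node cs =>
      cases T with
      | node ds =>
        have hs1 : (RTree.node ds).size ≤ (RTree.node cs).size := by
          by_contra h
          exact h1 ((hspec cs ds).mpr (Or.inl (by omega)))
        have hs2 : (RTree.node cs).size ≤ (RTree.node ds).size := by
          by_contra h
          exact h2 ((hspec ds cs).mpr (Or.inl (by omega)))
        have hsz : (RTree.node cs).size = (RTree.node ds).size := le_antisymm hs2 hs1
        have hl1 : ¬ cs.length < ds.length := fun h =>
          h1 ((hspec cs ds).mpr (Or.inr (Or.inl ⟨hsz, h⟩)))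
        have hl2 : ¬ ds.length < cs.length := fun h =>
          h2 ((hspec ds cs).mpr (Or.inr (Or.inl ⟨hsz.symm, h⟩)))
        have hlen : cs.length = ds.length := by omega
        obtain ⟨cs', pcs, scs⟩ := exists_sorted_perm hA hB cs (fun _ _ => trivial)
        obtain ⟨ds', pds, sds⟩ := exists_sorted_perm hA hB ds (fun _ _ => trivial)
        have hnl1 : ¬ ListLex lt cs' ds' := fun h =>
          h1 ((hspec cs ds).mpr (Or.inr (Or.inr ⟨hsz, hlen, cs', ds', pcs, pds, scs, sds, h⟩)))
        have hnl2 : ¬ ListLex lt ds' cs' := fun h =>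
          h2 ((hspec ds cs).mpr (Or.inr (Or.inr
            ⟨hsz.symm, hlen.symm, ds', cs', pds, pcs, sds, scs, h⟩)))
        have hlen' : cs'.length = ds'.length := by
          rw [← pcs.length_eq, ← pds.length_eq]; exact hlen
        have F : List.Forall₂ (RTie lt) cs' ds' := forall₂_tie_of_not_lex hlen' hnl1 hnl2
        have FIso : List.Forall₂ RTree.Iso cs' ds' := by
          refine forall₂_imp_mem F ?_
          intro x hx y hy hxy
          have hxc : x ∈ cs := pcs.mem_iff.mpr hx
          have hyd : y ∈ ds := pds.mem_iff.mpr hy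
          have hxs := RTree.size_le_sizeList hxc
          have hys := RTree.size_le_sizeList hyd
          have hcs : (RTree.node cs).size = 1 + RTree.sizeList cs := rfl
          have hds : (RTree.node ds).size = 1 + RTree.sizeList ds := rfl
          exact IH (n - 1) (by omega) x y (by omega) hxy.1 hxy.2
        obtain ⟨ds'', pd, Fc⟩ := forall₂_perm_left pcs FIso
        exact RTree.Iso.node cs ds ds'' (pds.trans pd) Fc
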